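/- For any finite simple graph G with vertex cover number τ(G) > 1, one has 2·δ_loc(G) ≤ τ(G) + log₂(τ(G)). -/

import Mathlib

open Finset

open Classical in
/-- The odd-neighbourhood of `D` in `G`: vertices having an odd number of neighbours in `D`. -/
noncomputable def oddNbhd {V : Type*} [Fintype V] (G : SimpleGraph V) (D : Finset V) :
    Finset V :=
  Finset.univ.filter fun v => Odd ((D.filter fun u => G.Adj v u).card)

private lemma aux_two_mul_le_two_pow : ∀ j : ℕ, 1 ≤ j → 2 * j ≤ 2 ^ j := by
  intro j hj
  induction j with
  | zero => omega
  | succ n ih =>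
    rcases Nat.eq_or_lt_of_le hj with h | h
    · simp [← h]
    · have h1 : 1 ≤ n := by omega
      have := ih h1
      have : 2 ^ n ≥ 2 := by
        calc 2 = 2*1 := by ring
        _ ≤ 2 * n := by omega
        _ ≤ 2 ^ n := this
      rw [pow_succ]
      omega

-- parity: odd-sum subsets are at most even-sum subsets
private lemma aux_odd_le_even {α : Type*} [DecidableEq α] (s : Finset α) (c : α → ℕ) :
    (s.powerset.filter fun E => Odd (∑ a ∈ E, c a)).card ≤
      (s.powerset.filter fun E => ¬ Odd (∑ a ∈ E, c a)).card := by
  by_cases hall : ∀ a ∈ s, Even (c a)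
  · have : (s.powerset.filter fun E => Odd (∑ a ∈ E, c a)) = ∅ := by
      rw [Finset.filter_eq_empty_iff]
      intro E hE
      rw [Finset.mem_powerset] at hE
      rw [Nat.not_odd_iff_even]
      rw [Finset.even_sum_iff_even_card_odd]
      have : (E.filter fun x => Odd (c x)) = ∅ := by
        rw [Finset.filter_eq_empty_iff]
        intro x hx
        rw [Nat.not_odd_iff_even]
        exact hall x (hE hx)
      simp [this]
    simp [this]
  · push_neg at hall
    obtain ⟨a₀, ha₀s, ha₀⟩ := hall
    rw [Nat.not_even_iff_odd] at ha₀
    apply Finset.card_le_card_of_injOn (fun E => if a₀ ∈ E then E.erase a₀ else insert a₀ E)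
    · intro E hE
      rw [Finset.mem_coe, Finset.mem_filter, Finset.mem_powerset] at hE
      obtain ⟨hEs, hodd⟩ := hE
      rw [Finset.mem_coe, Finset.mem_filter, Finset.mem_powerset]
      by_cases h : a₀ ∈ E
      · simp only [h, if_true]
        constructor
        · exact (Finset.erase_subset _ _).trans hEs
        · have hsum : ∑ a ∈ E, c a = c a₀ + ∑ a ∈ E.erase a₀, c a := by
            exact (Finset.add_sum_erase _ _ h).symm
          rw [Nat.not_odd_iff_even]
          rw [hsum] at hodd
          exact (Nat.odd_add.1 hodd).1 ha₀
      · simp only [h, if_false]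
        constructor
        · exact Finset.insert_subset ha₀s hEs
        · rw [Finset.sum_insert h, Nat.not_odd_iff_even, Nat.even_add]
          constructor
          · intro he; exact ((Nat.not_even_iff_odd.2 ha₀) he).elim
          · intro he; exact ((Nat.not_even_iff_odd.2 hodd) he).elim
    · intro E hE F hF hEF
      rw [Finset.mem_coe, Finset.mem_filter] at hE hF
      by_cases hE0 : a₀ ∈ E <;> by_cases hF0 : a₀ ∈ F <;> simp only [hE0, hF0, if_true, if_false] at hEF
      · ext x
        by_cases hx : x = a₀
        · subst hx; simp [hE0, hF0]
        · constructor
          · intro h; have := Finset.mem_erase.2 ⟨hx, h⟩; rw [hEF] at this; exact (Finset.mem_erase.1 this).2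
          · intro h; have := Finset.mem_erase.2 ⟨hx, h⟩; rw [← hEF] at this; exact (Finset.mem_erase.1 this).2
      · exfalso
        have : a₀ ∈ insert a₀ F := Finset.mem_insert_self _ _
        rw [← hEF] at this
        exact (Finset.mem_erase.1 this).1 rfl
      · exfalso
        have : a₀ ∈ insert a₀ E := Finset.mem_insert_self _ _
        rw [hEF] at this
        exact (Finset.mem_erase.1 this).1 rfl
      · ext x
        by_cases hx : x = a₀
        · subst hx; simp [hE0, hF0]
        · constructor
          · intro h
            have h2 : x ∈ insert a₀ E := Finset.mem_insert_of_mem h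
            rw [hEF] at h2; rcases Finset.mem_insert.1 h2 with h' | h'; exact absurd h' hx; exact h'
          · intro h
            have h2 : x ∈ insert a₀ F := Finset.mem_insert_of_mem h
            rw [← hEF] at h2; rcases Finset.mem_insert.1 h2 with h' | h'; exact absurd h' hx; exact h'

private lemma aux_P1 {α : Type*} [DecidableEq α] (s : Finset α) (c : α → ℕ) :
    2 * (s.powerset.filter fun E => Odd (∑ a ∈ E, c a)).card ≤ 2 ^ s.card := by
  have h := Finset.card_filter_add_card_filter_not
    (s := s.powerset) (p := fun E => Odd (∑ a ∈ E, c a))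
  rw [Finset.card_powerset] at h
  have h2 := aux_odd_le_even s c
  omega

private lemma aux_powerset_not_mem {α : Type*} [DecidableEq α] (s : Finset α) (a₀ : α) :
    s.powerset.filter (fun E => ¬ a₀ ∈ E) = (s.erase a₀).powerset := by
  ext E
  simp only [Finset.mem_filter, Finset.mem_powerset, Finset.subset_erase]

private lemma aux_Phalf {α : Type*} [DecidableEq α] (s : Finset α) (a₀ : α) (ha : a₀ ∈ s) :
    2 * (s.powerset.filter fun E => a₀ ∈ E).card ≤ 2 ^ s.card := by
  have h := Finset.card_filter_add_card_filter_not
    (s := s.powerset) (p := fun E => a₀ ∈ E)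
  rw [Finset.card_powerset, aux_powerset_not_mem s a₀, Finset.card_powerset,
    Finset.card_erase_of_mem ha] at h
  have h1 : 1 ≤ s.card := Finset.card_pos.2 ⟨a₀, ha⟩
  have h2 : 2 ^ (s.card - 1) * 2 = 2 ^ s.card := by
    rw [← pow_succ]
    congr 1
    omega
  omega

private lemma aux_P2 {α : Type*} [DecidableEq α] (s : Finset α) (c : α → ℕ) (a₀ : α)
    (ha : a₀ ∈ s) :
    4 * (s.powerset.filter fun E => a₀ ∈ E ∨ Odd (∑ a ∈ E, c a)).card ≤ 3 * 2 ^ s.card := by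
  have h := Finset.card_filter_add_card_filter_not
    (s := s.powerset) (p := fun E => a₀ ∈ E ∨ Odd (∑ a ∈ E, c a))
  rw [Finset.card_powerset] at h
  -- the complement count is at least 2 ^ (s.card) / 4
  have hcompl : (s.powerset.filter fun E => ¬ (a₀ ∈ E ∨ Odd (∑ a ∈ E, c a))).card
      = ((s.erase a₀).powerset.filter fun E => ¬ Odd (∑ a ∈ E, c a)).card := by
    congr 1
    ext E
    simp only [Finset.mem_filter, Finset.mem_powerset, Finset.subset_erase, not_or]
    tauto
  have h3 := Finset.card_filter_add_card_filter_not
    (s := (s.erase a₀).powerset) (p := fun E => Odd (∑ a ∈ E, c a))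
  rw [Finset.card_powerset, Finset.card_erase_of_mem ha] at h3
  have h4 := aux_odd_le_even (s.erase a₀) c
  have h1 : 1 ≤ s.card := Finset.card_pos.2 ⟨a₀, ha⟩
  have h2 : 2 ^ (s.card - 1) * 2 = 2 ^ s.card := by
    rw [← pow_succ]; congr 1; omega
  omega

open Classical in
private lemma mem_oddNbhd {V : Type*} [Fintype V] (G : SimpleGraph V) (D : Finset V) (v : V) :
    v ∈ oddNbhd G D ↔ Odd ((D.filter fun u => G.Adj v u).card) := by
  classical
  simp [oddNbhd]

open Classical in
private lemma aux_counting {V : Type*} [Fintype V] [DecidableEq V] (G : SimpleGraph V)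
    (S : Finset V) (𝒢 : Finset (Finset V)) (k : ℕ) (hk : 𝒢.card = k) (hk2 : 2 ≤ k)
    (hne : ∀ g ∈ 𝒢, g.Nonempty)
    (hdisj : ∀ g ∈ 𝒢, ∀ g' ∈ 𝒢, g ≠ g' → Disjoint g g')
    (hstruct : ∀ g ∈ 𝒢, (g ⊆ S ∧ g.card ≤ 2) ∨ (g.card = 1 ∧ Disjoint g S))
    (heven : ∀ g ∈ 𝒢, ∀ u, u ∉ S → Even ((g.filter fun w => G.Adj u w).card)) :
    ∃ D : Finset V, D.Nonempty ∧
      2 ^ k * (4 * (D ∪ oddNbhd G D).card) ≤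
        (S.card + k) * 2 ^ (k + 1) + 4 * (D ∪ oddNbhd G D).card := by
  classical
  set DU : Finset (Finset V) → Finset V :=
    fun E => (E.biUnion id) ∪ oddNbhd G (E.biUnion id) with hDUdef
  -- membership description
  have hDU : ∀ E ∈ 𝒢.powerset, ∀ u : V, (u ∈ DU E ↔
      ((∃ g ∈ E, u ∈ g) ∨ Odd (∑ g ∈ E, ((g.filter fun w => G.Adj u w).card)))) := by
    intro E hE u
    rw [Finset.mem_powerset] at hE
    simp only [hDUdef, Finset.mem_union, Finset.mem_biUnion, mem_oddNbhd, id]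
    have h1 : (E.biUnion id).filter (fun w => G.Adj u w)
        = E.biUnion (fun g => (id g).filter (fun w => G.Adj u w)) :=
      Finset.filter_biUnion E id (fun w => G.Adj u w)
    have h2 : (E.biUnion (fun g => (id g).filter (fun w => G.Adj u w))).card
        = ∑ g ∈ E, ((id g).filter (fun w => G.Adj u w)).card := by
      apply Finset.card_biUnion
      intro x hx y hy hxy
      exact Finset.disjoint_filter_filter (hdisj x (hE hx) y (hE hy) hxy)
    rw [h1, h2]
    simp [id]
  -- sum over powerset, swapped
  have hswap : ∑ E ∈ 𝒢.powerset, (DU E).card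
      = ∑ u : V, (𝒢.powerset.filter fun E => u ∈ DU E).card := by
    have hc : ∀ T : Finset V, T.card = ∑ u : V, if u ∈ T then 1 else 0 := by
      intro T
      rw [Finset.sum_ite_mem, Finset.univ_inter, Finset.card_eq_sum_ones]
    calc ∑ E ∈ 𝒢.powerset, (DU E).card
        = ∑ E ∈ 𝒢.powerset, ∑ u : V, (if u ∈ DU E then 1 else 0) := by
          apply Finset.sum_congr rfl; intro E _; exact hc (DU E)
      _ = ∑ u : V, ∑ E ∈ 𝒢.powerset, (if u ∈ DU E then 1 else 0) := Finset.sum_comm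
      _ = ∑ u : V, (𝒢.powerset.filter fun E => u ∈ DU E).card := by
          apply Finset.sum_congr rfl; intro u _
          rw [Finset.card_filter]
  -- per-vertex bound
  have hvert : ∀ u : V, 4 * (𝒢.powerset.filter fun E => u ∈ DU E).card ≤
      (if u ∈ S then 2 ^ (k + 1) else 0) +
      (if u ∈ 𝒢.biUnion id then (if u ∈ S then 2 ^ k else 2 ^ (k + 1)) else 0) := by
    intro u
    set c : Finset V → ℕ := fun g => ((g.filter fun w => G.Adj u w).card) with hcdef
    by_cases hug : u ∈ 𝒢.biUnion id
    · -- u belongs to a unique generator g₀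
      obtain ⟨g₀, hg₀𝒢, hug₀⟩ := Finset.mem_biUnion.1 hug
      simp only [id_eq] at hug₀
      have huniq : ∀ E ∈ 𝒢.powerset, ((∃ g ∈ E, u ∈ g) ↔ g₀ ∈ E) := by
        intro E hE
        rw [Finset.mem_powerset] at hE
        constructor
        · rintro ⟨g, hgE, hug'⟩
          have : g = g₀ := by
            by_contra hne'
            exact (Finset.disjoint_left.1 (hdisj g (hE hgE) g₀ hg₀𝒢 hne')) hug' hug₀
          rwa [← this]
        · intro h; exact ⟨g₀, h, hug₀⟩
      by_cases huS : u ∈ S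
      · -- use P2
        simp only [hug, huS, if_true]
        have hfe : (𝒢.powerset.filter fun E => u ∈ DU E)
            = (𝒢.powerset.filter fun E => g₀ ∈ E ∨ Odd (∑ g ∈ E, c g)) := by
          apply Finset.filter_congr
          intro E hE
          rw [hDU E hE u, huniq E hE]
        rw [hfe]
        have := aux_P2 𝒢 c g₀ hg₀𝒢
        rw [hk] at this
        have h3 : 3 * 2 ^ k = 2 ^ (k+1) + 2 ^ k := by ring
        omega
      · -- odd part impossible
        simp only [hug, huS, if_true, if_false]
        have hfe : (𝒢.powerset.filter fun E => u ∈ DU E)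
            = (𝒢.powerset.filter fun E => g₀ ∈ E) := by
          apply Finset.filter_congr
          intro E hE
          rw [hDU E hE u, huniq E hE]
          have hev : ¬ Odd (∑ g ∈ E, c g) := by
            rw [Nat.not_odd_iff_even]
            apply Finset.even_sum_iff_even_card_odd c |>.2
            have : (E.filter fun g => Odd (c g)) = ∅ := by
              rw [Finset.filter_eq_empty_iff]
              intro g hg
              rw [Nat.not_odd_iff_even]
              exact heven g (Finset.mem_powerset.1 hE hg) u huS
            simp [this]
          rw [or_iff_left hev]
        rw [hfe]
        have := aux_Phalf 𝒢 g₀ hg₀𝒢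
        rw [hk] at this
        omega
    · by_cases huS : u ∈ S
      · simp only [hug, huS, if_true, if_false]
        have hfe : (𝒢.powerset.filter fun E => u ∈ DU E)
            = (𝒢.powerset.filter fun E => Odd (∑ g ∈ E, c g)) := by
          apply Finset.filter_congr
          intro E hE
          rw [hDU E hE u]
          have : ¬ (∃ g ∈ E, u ∈ g) := by
            rintro ⟨g, hgE, hug'⟩
            exact hug (Finset.mem_biUnion.2 ⟨g, Finset.mem_powerset.1 hE hgE, hug'⟩)
          rw [or_iff_right this]
        rw [hfe]
        have := aux_P1 𝒢 c
        rw [hk] at this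
        omega
      · simp only [hug, huS, if_false]
        have hfe : (𝒢.powerset.filter fun E => u ∈ DU E) = ∅ := by
          rw [Finset.filter_eq_empty_iff]
          intro E hE
          rw [hDU E hE u]
          push_neg
          constructor
          · intro g hgE hug'
            exact hug (Finset.mem_biUnion.2 ⟨g, Finset.mem_powerset.1 hE hgE, hug'⟩)
          · rw [Nat.not_odd_iff_even]
            apply Finset.even_sum_iff_even_card_odd c |>.2
            have : (E.filter fun g => Odd (c g)) = ∅ := by
              rw [Finset.filter_eq_empty_iff]
              intro g hg
              rw [Nat.not_odd_iff_even]
              exact heven g (Finset.mem_powerset.1 hE hg) u huS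
            simp [this]
        rw [hfe]
        simp
  -- total bound
  have htotal : ∑ E ∈ 𝒢.powerset, 4 * (DU E).card ≤ (S.card + k) * 2 ^ (k + 1) := by
    rw [← Finset.mul_sum, hswap, Finset.mul_sum]
    calc ∑ u : V, 4 * (𝒢.powerset.filter fun E => u ∈ DU E).card
        ≤ ∑ u : V, ((if u ∈ S then 2 ^ (k + 1) else 0) +
            (if u ∈ 𝒢.biUnion id then (if u ∈ S then 2 ^ k else 2 ^ (k + 1)) else 0)) :=
          Finset.sum_le_sum (fun u _ => hvert u)
      _ = (∑ u : V, (if u ∈ S then 2 ^ (k + 1) else 0)) +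
            (∑ u : V, (if u ∈ 𝒢.biUnion id then (if u ∈ S then 2 ^ k else 2 ^ (k + 1)) else 0)) :=
          Finset.sum_add_distrib
      _ ≤ S.card * 2 ^ (k + 1) + k * 2 ^ (k + 1) := by
          gcongr
          · rw [Finset.sum_ite_mem, Finset.univ_inter, Finset.sum_const, smul_eq_mul]
          · rw [Finset.sum_ite_mem, Finset.univ_inter]
            have hpd : Set.PairwiseDisjoint (↑𝒢 : Set (Finset V)) id := by
              intro x hx y hy hxy
              exact hdisj x hx y hy hxy
            rw [Finset.sum_biUnion hpd]
            calc ∑ g ∈ 𝒢, ∑ u ∈ id g, (if u ∈ S then 2 ^ k else 2 ^ (k + 1))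
                ≤ ∑ g ∈ 𝒢, 2 ^ (k + 1) := by
                  apply Finset.sum_le_sum
                  intro g hg
                  rcases hstruct g hg with ⟨hsub, hcard⟩ | ⟨hcard, hdisjS⟩
                  · calc ∑ u ∈ id g, (if u ∈ S then 2 ^ k else 2 ^ (k + 1))
                        = ∑ u ∈ g, 2 ^ k := by
                          apply Finset.sum_congr rfl
                          intro u hu; simp [hsub hu]
                      _ = g.card * 2 ^ k := by rw [Finset.sum_const, smul_eq_mul]
                      _ ≤ 2 * 2 ^ k := by
                          apply Nat.mul_le_mul_right _ hcard
                      _ = 2 ^ (k + 1) := by ring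
                  · calc ∑ u ∈ id g, (if u ∈ S then 2 ^ k else 2 ^ (k + 1))
                        = ∑ u ∈ g, 2 ^ (k + 1) := by
                          apply Finset.sum_congr rfl
                          intro u hu
                          have : u ∉ S := Finset.disjoint_left.1 hdisjS hu
                          simp [this]
                      _ = g.card * 2 ^ (k + 1) := by rw [Finset.sum_const, smul_eq_mul]
                      _ ≤ 2 ^ (k + 1) := le_of_eq (by rw [hcard, one_mul])
              _ = k * 2 ^ (k + 1) := by rw [Finset.sum_const, smul_eq_mul, hk]
      _ = (S.card + k) * 2 ^ (k + 1) := by ring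
  -- extract a minimizer among nonempty subsets
  have h𝒢ne : 𝒢.Nonempty := Finset.card_pos.1 (by omega)
  set s₀ := 𝒢.powerset.erase ∅ with hs₀def
  have hs₀ne : s₀.Nonempty := by
    obtain ⟨g₀, hg₀⟩ := h𝒢ne
    refine ⟨{g₀}, Finset.mem_erase.2 ⟨by simp, Finset.mem_powerset.2 (by simp [hg₀])⟩⟩
  obtain ⟨E₀, hE₀s, hE₀min⟩ := Finset.exists_min_image s₀ (fun E => (DU E).card) hs₀ne
  have hcards : s₀.card + 1 = 2 ^ k := by
    rw [hs₀def, Finset.card_erase_of_mem (Finset.empty_mem_powerset 𝒢), Finset.card_powerset, hk]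
    have : 1 ≤ 2 ^ k := Nat.one_le_two_pow
    omega
  have hmin : s₀.card * (4 * (DU E₀).card) ≤ ∑ E ∈ s₀, 4 * (DU E).card := by
    have := Finset.card_nsmul_le_sum s₀ (fun E => 4 * (DU E).card) (4 * (DU E₀).card)
      (fun E hE => by
        show 4 * (DU E₀).card ≤ 4 * (DU E).card
        have := hE₀min E hE; omega)
    simpa [smul_eq_mul] using this
  have hsub : ∑ E ∈ s₀, 4 * (DU E).card ≤ ∑ E ∈ 𝒢.powerset, 4 * (DU E).card :=
    Finset.sum_le_sum_of_subset (Finset.erase_subset _ _)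
  refine ⟨E₀.biUnion id, ?_, ?_⟩
  · have hE₀ne : E₀ ≠ ∅ := (Finset.mem_erase.1 hE₀s).1
    obtain ⟨g, hg⟩ := Finset.nonempty_iff_ne_empty.2 hE₀ne
    have hg𝒢 : g ∈ 𝒢 := Finset.mem_powerset.1 (Finset.mem_of_mem_erase hE₀s) hg
    obtain ⟨u, hu⟩ := hne g hg𝒢
    exact ⟨u, Finset.mem_biUnion.2 ⟨g, hg, hu⟩⟩
  · have hchain : s₀.card * (4 * (DU E₀).card) ≤ (S.card + k) * 2 ^ (k + 1) :=
      le_trans hmin (le_trans hsub htotal)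
    have heq : 2 ^ k * (4 * (DU E₀).card) = s₀.card * (4 * (DU E₀).card) + 4 * (DU E₀).card := by
      rw [← hcards]; ring
    show 2 ^ k * (4 * (DU E₀).card) ≤ (S.card + k) * 2 ^ (k + 1) + 4 * (DU E₀).card
    omega

/-- Extract `p` pairwise-disjoint same-pattern pairs from `F`. -/
private lemma aux_pairs {V : Type*} [DecidableEq V] (pattern : V → Finset V)
    (T : Finset (Finset V)) :
    ∀ (p : ℕ) (F : Finset V), (∀ s ∈ F, pattern s ∈ T) → 2 * p + T.card ≤ F.card + 1 →
    ∃ PP : Finset (Finset V), PP.card = p ∧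
      (∀ g ∈ PP, g ⊆ F ∧ ∃ a b, a ≠ b ∧ g = {a, b} ∧ pattern a = pattern b) ∧
      (∀ g ∈ PP, ∀ g' ∈ PP, g ≠ g' → Disjoint g g') := by
  intro p
  induction p with
  | zero =>
    intro F _ _
    exact ⟨∅, by simp, by simp, by simp⟩
  | succ q ih =>
    intro F hmaps hcard
    have hlt : T.card < F.card := by omega
    obtain ⟨a, ha, b, hb, hab, hpat⟩ :=
      Finset.exists_ne_map_eq_of_card_lt_of_maps_to hlt hmaps
    set F' := F \ {a, b} with hF'def
    have hsubF : ({a, b} : Finset V) ⊆ F := by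
      intro x hx
      rcases Finset.mem_insert.1 hx with h | h
      · rwa [h]
      · rw [Finset.mem_singleton.1 h]; exact hb
    have hcard2 : ({a, b} : Finset V).card = 2 := Finset.card_pair hab
    have hF'card : F'.card = F.card - 2 := by
      rw [hF'def, Finset.card_sdiff_of_subset hsubF, hcard2]
    obtain ⟨PP', hc', hstr', hdisj'⟩ := ih F'
      (fun s hs => hmaps s (Finset.mem_sdiff.1 hs).1)
      (by have h2F : 2 ≤ F.card := hcard2 ▸ Finset.card_le_card hsubF
          omega)
    have habF' : ¬ ({a, b} : Finset V) ⊆ F' := by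
      intro h
      have := h (Finset.mem_insert_self a {b})
      rw [hF'def, Finset.mem_sdiff] at this
      exact this.2 (Finset.mem_insert_self a {b})
    have hnotmem : ({a, b} : Finset V) ∉ PP' := fun h => habF' (hstr' _ h).1
    refine ⟨insert {a, b} PP', ?_, ?_, ?_⟩
    · rw [Finset.card_insert_of_notMem hnotmem, hc']
    · intro g hg
      rcases Finset.mem_insert.1 hg with h | h
      · subst h
        exact ⟨hsubF, a, b, hab, rfl, hpat⟩
      · obtain ⟨h1, h2⟩ := hstr' g h
        exact ⟨h1.trans (Finset.sdiff_subset), h2⟩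
    · intro g hg g' hg' hne
      have hdab : ∀ g'' ∈ PP', Disjoint ({a, b} : Finset V) g'' := by
        intro g'' hg''
        rw [Finset.disjoint_left]
        intro x hx hx'
        have hxF' := (hstr' g'' hg'').1 hx'
        rw [hF'def, Finset.mem_sdiff] at hxF'
        exact hxF'.2 hx
      rcases Finset.mem_insert.1 hg with h | h <;> rcases Finset.mem_insert.1 hg' with h' | h'
      · exact absurd (h.trans h'.symm) hne
      · subst h; exact hdab g' h'
      · subst h'; exact (hdab g h).symm
      · exact hdisj' g h g' h' hne

private lemma aux_arith (c k t L : ℕ) (hk2 : 2 ≤ k)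
    (h1 : 2 ^ k * (4 * c) ≤ (t + k) * 2 ^ (k + 1) + 4 * c)
    (h2 : k + 2 ≤ 2 ^ k)
    (h3 : k ≤ L + 1)
    (h4 : t + 2 ≤ 2 ^ (k + 1))
    (h5 : 2 ^ k ≤ t → k ≤ L) :
    2 * c ≤ t + L + 2 := by
  by_contra hcon
  push_neg at hcon
  set X := 2 ^ k with hX
  have hX2 : (2:ℕ) ^ (k+1) = 2 * X := by rw [hX, pow_succ]; ring
  rw [hX2] at h1 h4
  have hXk : k + 2 ≤ X := h2
  -- pass to integers
  have h1' : (X:ℤ) * (4*c) ≤ (t+k) * (2*X) + 4*c := by exact_mod_cast h1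
  have h4' : (t:ℤ) + 2 ≤ 2*X := by exact_mod_cast h4
  have hXk' : (k:ℤ) + 2 ≤ X := by exact_mod_cast hXk
  have key2 : ((X:ℤ) - 1) * (4*c) ≤ 2*X*(t+k) := by nlinarith [h1']
  rcases le_or_gt (2^k) t with hcase | hcase
  · have hLk : k ≤ L := h5 hcase
    have hcon' : (t:ℤ) + k + 3 ≤ 2*c := by
      have : t + k + 3 ≤ 2*c := by omega
      exact_mod_cast this
    have key : ((X:ℤ) - 1) * (2*(t+k)+6) ≤ ((X:ℤ) - 1) * (4*c) := by
      apply mul_le_mul_of_nonneg_left _ (by linarith)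
      linarith
    have h8 : (6:ℤ)*X ≤ 2*t+2*k+6 := by nlinarith [key.trans key2]
    linarith
  · have hLk : k ≤ L + 1 := h3
    have ht' : (t:ℤ) + 1 ≤ X := by
      have : t + 1 ≤ 2^k := hcase
      exact_mod_cast this
    have hcon' : (t:ℤ) + k + 2 ≤ 2*c := by
      have : t + k + 2 ≤ 2*c := by omega
      exact_mod_cast this
    have key : ((X:ℤ) - 1) * (2*(t+k)+4) ≤ ((X:ℤ) - 1) * (4*c) := by
      apply mul_le_mul_of_nonneg_left _ (by linarith)
      linarith
    have h8 : (4:ℤ)*X ≤ 2*t+2*k+4 := by nlinarith [key.trans key2]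
    linarith

/-- For any finite simple graph `G` with vertex cover number `τ(G) > 1`,
`2 δ_loc(G) ≤ τ(G) + log₂(τ(G))`, where
`δ_loc(G) + 1 = min_{∅ ≠ D ⊆ V} |D ∪ Odd_G(D)|`. -/
theorem two_dloc_le_tau_add_log {V : Type*} [Fintype V] [DecidableEq V]
    (G : SimpleGraph V) (dloc tau : ℕ)
    (hd : dloc + 1 = sInf {m : ℕ | ∃ D : Finset V, D.Nonempty ∧ (D ∪ oddNbhd G D).card = m})
    (ht : tau = sInf {m : ℕ | ∃ S : Finset V,
      (∀ u v : V, G.Adj u v → u ∈ S ∨ v ∈ S) ∧ S.card = m})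
    (htau : 1 < tau) :
    2 * (dloc : ℝ) ≤ (tau : ℝ) + Real.logb 2 (tau : ℝ) := by
  classical
  -- extract a minimum vertex cover
  have hcovset : {m : ℕ | ∃ S : Finset V,
      (∀ u v : V, G.Adj u v → u ∈ S ∨ v ∈ S) ∧ S.card = m}.Nonempty :=
    ⟨(Finset.univ : Finset V).card, Finset.univ, fun u v _ => Or.inl (Finset.mem_univ u), rfl⟩
  obtain ⟨S, hScov, hScard⟩ : ∃ S : Finset V,
      (∀ u v : V, G.Adj u v → u ∈ S ∨ v ∈ S) ∧ S.card = tau := by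
    have := Nat.sInf_mem hcovset
    rw [← ht] at this
    exact this
  have hmincov : ∀ S' : Finset V, (∀ u v : V, G.Adj u v → u ∈ S' ∨ v ∈ S') →
      tau ≤ S'.card := by
    intro S' h
    rw [ht]; exact Nat.sInf_le ⟨S', h, rfl⟩
  have htau2 : 2 ≤ tau := htau
  set I : Finset V := Finset.univ \ S with hIdef
  have hImem : ∀ v : V, v ∈ I ↔ v ∉ S := by
    intro v; rw [hIdef, Finset.mem_sdiff]; simp
  have hnoadj : ∀ u v : V, u ∉ S → v ∉ S → ¬ G.Adj u v := by
    intro u v hu hv hadj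
    rcases hScov u v hadj with h | h
    · exact hu h
    · exact hv h
  -- I is nonempty
  have hIne : I.Nonempty := by
    by_contra h
    rw [Finset.not_nonempty_iff_eq_empty] at h
    obtain ⟨v₀, hv₀⟩ : S.Nonempty := Finset.card_pos.1 (by omega)
    have hcov' : ∀ u v : V, G.Adj u v → u ∈ S.erase v₀ ∨ v ∈ S.erase v₀ := by
      intro u v huv
      have hu : u ∈ S := by
        by_contra hu
        have : u ∈ I := (hImem u).2 hu
        rw [h] at this; exact absurd this (Finset.notMem_empty u)
      have hv : v ∈ S := by
        by_contra hv
        have : v ∈ I := (hImem v).2 hv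
        rw [h] at this; exact absurd this (Finset.notMem_empty v)
      have hne := G.ne_of_adj huv
      by_cases h0 : u = v₀
      · right; exact Finset.mem_erase.2 ⟨fun hh => hne ((h0.trans hh.symm)), hv⟩
      · left; exact Finset.mem_erase.2 ⟨h0, hu⟩
    have := hmincov _ hcov'
    rw [Finset.card_erase_of_mem hv₀, hScard] at this
    omega
  -- choice of k
  set L := Nat.log 2 tau with hLdef
  set k := max 2 (Nat.log 2 (tau + 1)) with hkdef
  have hk2 : 2 ≤ k := le_max_left _ _
  have hklog : Nat.log 2 (tau + 1) ≤ k := le_max_right _ _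
  have hF2 : tau + 2 ≤ 2 ^ (k + 1) := by
    have h1 : tau + 1 < 2 ^ (Nat.log 2 (tau + 1) + 1) := Nat.lt_pow_succ_log_self one_lt_two _
    have h2 : (2:ℕ) ^ (Nat.log 2 (tau + 1) + 1) ≤ 2 ^ (k + 1) :=
      Nat.pow_le_pow_right (by norm_num) (by omega)
    omega
  have hF3 : k ≤ L + 1 := by
    apply max_le
    · have : 0 < L := Nat.log_pos one_lt_two htau2
      omega
    · have h1 : (2:ℕ) ^ (Nat.log 2 (tau + 1)) ≤ tau + 1 := Nat.pow_log_le_self 2 (by omega)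
      have h2 : tau < 2 ^ (L + 1) := Nat.lt_pow_succ_log_self one_lt_two _
      have h3 : (2:ℕ) ^ (Nat.log 2 (tau + 1)) ≤ 2 ^ (L + 1) := by omega
      exact (Nat.pow_le_pow_iff_right (by norm_num)).1 h3
  have hF5 : k + 2 ≤ 2 ^ k := by
    have := aux_two_mul_le_two_pow k (by omega)
    omega
  have hF6 : 2 ^ k ≤ tau → k ≤ L := by
    intro h
    exact (Nat.le_log_iff_pow_le one_lt_two (by omega)).2 h
  -- construct the generators
  have hGG : ∃ GG : Finset (Finset V), GG.card = k ∧
      (∀ g ∈ GG, g.Nonempty) ∧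
      (∀ g ∈ GG, ∀ g' ∈ GG, g ≠ g' → Disjoint g g') ∧
      (∀ g ∈ GG, (g ⊆ S ∧ g.card ≤ 2) ∨ (g.card = 1 ∧ Disjoint g S)) ∧
      (∀ g ∈ GG, ∀ u, u ∉ S → Even ((g.filter fun w => G.Adj u w).card)) := by
    rcases le_or_gt k I.card with hmk | hmk
    · -- enough independent vertices: k singletons
      obtain ⟨J, hJsub, hJcard⟩ := Finset.exists_subset_card_eq hmk
      refine ⟨J.image (fun v => ({v} : Finset V)), ?_, ?_, ?_, ?_, ?_⟩
      · rw [Finset.card_image_of_injective _ Finset.singleton_injective, hJcard]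
      · intro g hg
        obtain ⟨v, _, rfl⟩ := Finset.mem_image.1 hg
        exact ⟨v, Finset.mem_singleton_self v⟩
      · intro g hg g' hg' hne'
        obtain ⟨v, _, rfl⟩ := Finset.mem_image.1 hg
        obtain ⟨w, _, rfl⟩ := Finset.mem_image.1 hg'
        have hvw : v ≠ w := fun h => hne' (by rw [h])
        simpa [Finset.disjoint_singleton] using hvw
      · intro g hg
        obtain ⟨v, hv, rfl⟩ := Finset.mem_image.1 hg
        right
        exact ⟨Finset.card_singleton v,
          Finset.disjoint_singleton_left.2 ((hImem v).1 (hJsub hv))⟩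
      · intro g hg u hu
        obtain ⟨v, hv, rfl⟩ := Finset.mem_image.1 hg
        have hvS : v ∉ S := (hImem v).1 (hJsub hv)
        have hnadj : ¬ G.Adj u v := hnoadj u v hu hvS
        rw [Finset.filter_singleton]
        simp [hnadj]
    · -- few independent vertices: all singletons plus same-pattern pairs
      have hm1 : 1 ≤ I.card := Finset.card_pos.2 hIne
      have hpatmem : ∀ s ∈ S, (I.filter fun v => G.Adj s v) ∈ I.powerset.erase ∅ := by
        intro s hs
        rw [Finset.mem_erase, Finset.mem_powerset]
        constructor
        · intro hpat0
          have hnb : ∀ w, G.Adj s w → w ∈ S.erase s := by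
            intro w hw
            have hwS : w ∈ S := by
              by_contra hwS
              have : w ∈ I.filter fun v => G.Adj s v :=
                Finset.mem_filter.2 ⟨(hImem w).2 hwS, hw⟩
              rw [hpat0] at this
              exact absurd this (Finset.notMem_empty w)
            exact Finset.mem_erase.2 ⟨(G.ne_of_adj hw).symm, hwS⟩
          have hcov' : ∀ u v : V, G.Adj u v → u ∈ S.erase s ∨ v ∈ S.erase s := by
            intro u v huv
            rcases hScov u v huv with hu | hv
            · by_cases h0 : u = s
              · right; apply hnb; rw [← h0]; exact huv
              · left; exact Finset.mem_erase.2 ⟨h0, hu⟩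
            · by_cases h0 : v = s
              · left; apply hnb; rw [← h0]; exact huv.symm
              · right; exact Finset.mem_erase.2 ⟨h0, hv⟩
          have := hmincov _ hcov'
          rw [Finset.card_erase_of_mem hs, hScard] at this
          omega
        · exact Finset.filter_subset _ _
      have hTcard : (I.powerset.erase ∅).card + 1 = 2 ^ I.card := by
        rw [Finset.card_erase_of_mem (Finset.empty_mem_powerset I), Finset.card_powerset]
        have : 1 ≤ 2 ^ I.card := Nat.one_le_two_pow
        omega
      have hfeas : 2 * (k - I.card) + (I.powerset.erase ∅).card ≤ S.card + 1 := by
        rw [hScard]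
        rcases le_or_gt 4 tau with h4 | h4
        · have hknat : k = Nat.log 2 (tau + 1) := by
            rw [hkdef]
            apply max_eq_right
            exact (Nat.le_log_iff_pow_le one_lt_two (by omega)).2 (by norm_num; omega)
          have hkpow : 2 ^ k ≤ tau + 1 := by
            rw [hknat]; exact Nat.pow_log_le_self 2 (by omega)
          obtain ⟨k', hk'⟩ : ∃ k', k = k' + 1 := ⟨k - 1, by omega⟩
          have e1 : 2 * (k - I.card) ≤ 2 ^ k' := by
            have h1 : 2 * (k - I.card) ≤ 2 * k' := by omega
            have h2 := aux_two_mul_le_two_pow k' (by omega)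
            omega
          have e2 : 2 ^ I.card ≤ 2 ^ k' := Nat.pow_le_pow_right (by norm_num) (by omega)
          have e3 : 2 ^ k' + 2 ^ k' = 2 ^ k := by rw [hk', pow_succ]; ring
          omega
        · have hklog2 : Nat.log 2 (tau + 1) ≤ 2 := by
            have h8 : tau + 1 < 2 ^ 3 := by omega
            have := Nat.log_lt_of_lt_pow (by omega : tau + 1 ≠ 0) h8
            omega
          have hkeq : k = 2 := by rw [hkdef]; exact max_eq_left hklog2
          have hmk2 : I.card < 2 := hkeq ▸ hmk
          have hmeq : I.card = 1 := by omega
          have hT1 : (I.powerset.erase ∅).card = 1 := by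
            have h2 : (2:ℕ) ^ I.card = 2 := by rw [hmeq]; norm_num
            omega
          rw [hkeq, hmeq, hT1]
          omega
      obtain ⟨PP, hPPcard, hPPstr, hPPdisj⟩ := aux_pairs (fun s => I.filter fun v => G.Adj s v)
        (I.powerset.erase ∅) (k - I.card) S hpatmem hfeas
      have hdisjPI : Disjoint PP (I.image (fun v => ({v} : Finset V))) := by
        rw [Finset.disjoint_left]
        intro g hg hg'
        obtain ⟨_, a, b, hab, rfl, _⟩ := hPPstr g hg
        obtain ⟨v, hv, hveq⟩ := Finset.mem_image.1 hg'
        have h2 : ({a, b} : Finset V).card = 2 := Finset.card_pair hab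
        rw [← hveq] at h2
        simp at h2
      have hsingdisj : ∀ g ∈ PP, ∀ v ∈ I, Disjoint g ({v} : Finset V) := by
        intro g hg v hv
        obtain ⟨hgS, _, _, _, _, _⟩ := hPPstr g hg
        rw [Finset.disjoint_right]
        intro x hx hxg
        rw [Finset.mem_singleton] at hx
        subst hx
        exact (hImem x).1 hv (hgS hxg)
      refine ⟨PP ∪ I.image (fun v => ({v} : Finset V)), ?_, ?_, ?_, ?_, ?_⟩
      · rw [Finset.card_union_of_disjoint hdisjPI, hPPcard,
          Finset.card_image_of_injective _ Finset.singleton_injective]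
        omega
      · intro g hg
        rcases Finset.mem_union.1 hg with h | h
        · obtain ⟨_, a, b, hab, rfl, _⟩ := hPPstr g h
          exact ⟨a, by simp⟩
        · obtain ⟨v, _, rfl⟩ := Finset.mem_image.1 h
          exact ⟨v, Finset.mem_singleton_self v⟩
      · intro g hg g' hg' hne'
        rcases Finset.mem_union.1 hg with h | h <;> rcases Finset.mem_union.1 hg' with h' | h'
        · exact hPPdisj g h g' h' hne'
        · obtain ⟨v, hv, rfl⟩ := Finset.mem_image.1 h'
          exact hsingdisj g h v hv
        · obtain ⟨v, hv, rfl⟩ := Finset.mem_image.1 h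
          exact (hsingdisj g' h' v hv).symm
        · obtain ⟨v, _, rfl⟩ := Finset.mem_image.1 h
          obtain ⟨w, _, rfl⟩ := Finset.mem_image.1 h'
          have hvw : v ≠ w := fun hh => hne' (by rw [hh])
          simpa [Finset.disjoint_singleton] using hvw
      · intro g hg
        rcases Finset.mem_union.1 hg with h | h
        · obtain ⟨hgS, a, b, hab, rfl, _⟩ := hPPstr g h
          left
          exact ⟨hgS, by rw [Finset.card_pair hab]⟩
        · obtain ⟨v, hv, rfl⟩ := Finset.mem_image.1 h
          right
          exact ⟨Finset.card_singleton v,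
            Finset.disjoint_singleton_left.2 ((hImem v).1 hv)⟩
      · intro g hg u hu
        rcases Finset.mem_union.1 hg with h | h
        · obtain ⟨hgS, a, b, hab, rfl, hpateq⟩ := hPPstr g h
          have huI : u ∈ I := (hImem u).2 hu
          have hiff : G.Adj u a ↔ G.Adj u b := by
            constructor
            · intro hua
              have hmem : u ∈ I.filter fun v => G.Adj a v :=
                Finset.mem_filter.2 ⟨huI, hua.symm⟩
              rw [hpateq] at hmem
              exact (Finset.mem_filter.1 hmem).2.symm
            · intro hub
              have hmem : u ∈ I.filter fun v => G.Adj b v :=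
                Finset.mem_filter.2 ⟨huI, hub.symm⟩
              rw [← hpateq] at hmem
              exact (Finset.mem_filter.1 hmem).2.symm
          by_cases hua : G.Adj u a
          · have hub := hiff.1 hua
            have heq : ({a, b} : Finset V).filter (fun w => G.Adj u w) = {a, b} := by
              apply Finset.filter_eq_self.2
              intro x hx
              rcases Finset.mem_insert.1 hx with h0 | h0
              · rwa [h0]
              · rw [Finset.mem_singleton.1 h0]; exact hub
            rw [heq, Finset.card_pair hab]
            exact even_two
          · have hub : ¬ G.Adj u b := fun hh => hua (hiff.2 hh)
            have heq : ({a, b} : Finset V).filter (fun w => G.Adj u w) = ∅ := by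
              apply Finset.filter_eq_empty_iff.2
              intro x hx
              rcases Finset.mem_insert.1 hx with h0 | h0
              · rw [h0]; exact hua
              · rw [Finset.mem_singleton.1 h0]; exact hub
            rw [heq]
            simp
        · obtain ⟨v, hv, rfl⟩ := Finset.mem_image.1 h
          have hvS : v ∉ S := (hImem v).1 hv
          have hnadj : ¬ G.Adj u v := hnoadj u v hu hvS
          rw [Finset.filter_singleton]
          simp [hnadj]
  obtain ⟨GG, hGGcard, hGGne, hGGdisj, hGGstruct, hGGeven⟩ := hGG
  obtain ⟨D, hDne, hDbound⟩ := aux_counting G S GG k hGGcard hk2 hGGne hGGdisj hGGstruct hGGeven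
  rw [hScard] at hDbound
  have harith := aux_arith ((D ∪ oddNbhd G D).card) k tau L hk2 hDbound hF5 hF3 hF2 hF6
  have hdloc : dloc + 1 ≤ (D ∪ oddNbhd G D).card := by
    rw [hd]
    exact Nat.sInf_le ⟨D, hDne, rfl⟩
  have hnat : 2 * dloc ≤ tau + L := by omega
  have hreal : (2 * dloc : ℝ) ≤ (tau : ℝ) + (L : ℝ) := by exact_mod_cast hnat
  have hlogb : (L : ℝ) ≤ Real.logb 2 (tau : ℝ) := by
    have := Real.natLog_le_logb tau 2
    rw [← hLdef] at this
    exact_mod_cast this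
  push_cast at hreal ⊢
  linarith
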